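/- Let σ = 0 and let J ⊆ (0,∞) be an interval. Let V, p : J → ℝ be continuously differentiable with p(x) ∈ (0,1) for all x ∈ J, and suppose (r+λ)·(p(x) − 1) = H_ξ(x, V'(x), p(x))·p'(x) for all x ∈ J. Let x : [0,T] → J be continuously differentiable with ẋ(t) = H_ξ(x(t), V'(x(t)), p(x(t))) for all t ∈ [0,T]. Then 1 − p(x(0)) = (1 − p(x(t)))·e^{−(r+λ)t} for every t ∈ [0,T]. -/

import Mathlib

open Set Filter

/-- The deterministic (σ = 0) Hamiltonian
`H(x,ξ,p) = inf_{ω ∈ [0,1)} { L(ω) − (ξ/p)·ω } + ((λ+r)/p − λ − μ)·x·ξ`. -/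
noncomputable def Ham0 (L : ℝ → ℝ) (lam r mu x ξ p : ℝ) : ℝ :=
  sInf ((fun ω => L ω - ξ / p * ω) '' Set.Ico 0 1) +
    ((lam + r) / p - lam - mu) * x * ξ

/-- The partial derivative `H_ξ` of the Hamiltonian in its second argument. -/
noncomputable def Hxi0 (L : ℝ → ℝ) (lam r mu x ξ p : ℝ) : ℝ :=
  deriv (fun ξ' => Ham0 L lam r mu x ξ' p) ξ

theorem stmt_5
    (r mu lam : ℝ) (hmu : 0 ≤ mu) (hr : mu < r) (hlam : 0 ≤ lam)
    (L : ℝ → ℝ)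
    (hL : ContDiffOn ℝ 2 L (Set.Ico 0 1))
    (hL0 : L 0 = 0)
    (hL1 : ∀ u ∈ Set.Ico (0:ℝ) 1, 0 < deriv L u)
    (hL2 : ∀ u ∈ Set.Ico (0:ℝ) 1, 0 < deriv (deriv L) u)
    (hLtop : Filter.Tendsto L (nhdsWithin 1 (Set.Iio 1)) Filter.atTop)
    (J : Set ℝ) (hJ : J ⊆ Set.Ioi 0) (hJoc : J.OrdConnected)
    (V p V' p' : ℝ → ℝ)
    (hVd : ∀ x ∈ J, HasDerivAt V (V' x) x) (hV'c : ContinuousOn V' J)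
    (hpd : ∀ x ∈ J, HasDerivAt p (p' x) x) (hp'c : ContinuousOn p' J)
    (hpr : ∀ x ∈ J, p x ∈ Set.Ioo (0:ℝ) 1)
    (hode : ∀ x ∈ J, (r + lam) * (p x - 1) = Hxi0 L lam r mu x (V' x) (p x) * p' x)
    (T : ℝ) (hT : 0 ≤ T)
    (X : ℝ → ℝ) (hXJ : ∀ t ∈ Set.Icc (0:ℝ) T, X t ∈ J)
    (hX : ∀ t ∈ Set.Icc (0:ℝ) T,
      HasDerivAt X (Hxi0 L lam r mu (X t) (V' (X t)) (p (X t))) t) :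
    ∀ t ∈ Set.Icc (0:ℝ) T, 1 - p (X 0) = (1 - p (X t)) * Real.exp (-(r + lam) * t) := by
  intro t ht
  set f : ℝ → ℝ := fun s => (1 - p (X s)) * Real.exp (-(r + lam) * s) with hf
  have hderiv : ∀ s ∈ Set.Icc (0:ℝ) T, HasDerivAt f 0 s := by
    intro s hs
    have hXs := hXJ s hs
    have h1 : HasDerivAt (fun u => p (X u))
        (p' (X s) * Hxi0 L lam r mu (X s) (V' (X s)) (p (X s))) s :=
      (hpd _ hXs).comp s (hX s hs)
    have h2 : HasDerivAt (fun u => 1 - p (X u))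
        (-(p' (X s) * Hxi0 L lam r mu (X s) (V' (X s)) (p (X s)))) s :=
      by simpa using h1.const_sub 1
    have h3 : HasDerivAt (fun u : ℝ => Real.exp (-(r + lam) * u))
        (-(r + lam) * Real.exp (-(r + lam) * s)) s := by
      have hlin : HasDerivAt (fun u : ℝ => -(r + lam) * u) (-(r + lam)) s := by
        simpa using (hasDerivAt_id s).const_mul (-(r + lam))
      simpa [mul_comm] using hlin.exp
    have h4 := h2.mul h3
    have hode' := hode _ hXs
    rw [mul_comm (Hxi0 L lam r mu (X s) (V' (X s)) (p (X s)))] at hode'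
    refine h4.congr_deriv ?_
    rw [← hode']
    ring
  have hcont : ContinuousOn f (Set.Icc 0 T) := fun s hs =>
    (hderiv s hs).continuousAt.continuousWithinAt
  have key := constant_of_has_deriv_right_zero hcont
    (fun s hs => (hderiv s (Set.Ico_subset_Icc_self hs)).hasDerivWithinAt)
  have := key t ht
  simpa [hf] using this.symm
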